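/- arXiv:2509.04880 — 2 statements merged into one kernel-verified Lean document; each statement's English description precedes it below -/
import Mathlib

section
/- Let N be a positive integer and x : ℤ/Nℤ → {-1,1} with ∑_{i ∈ ℤ/Nℤ} x_i = 0, and let x̃ be the lift of x to ℤ. Then Σ_max(x̃) is finite, and moreover it is attained by an interval of length strictly less than N: there exist integers a ≤ b with b - a + 1 < N (or the empty interval) such that Σ_a^b(x̃) = Σ_max(x̃). -/
/-- The set of all interval sums of the lift of `x : ZMod N → ℤ` to `ℤ`,
together with `0` (the empty interval sum). -/
def intervalSums (N : ℕ) (x : ZMod N → ℤ) : Set ℤ :=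
  {0} ∪ {s : ℤ | ∃ a b : ℤ, a ≤ b ∧ s = ∑ i ∈ Finset.Icc a b, x (i : ZMod N)}

lemma block_sum (N : ℕ) [NeZero N] (x : ZMod N → ℤ) (a : ℤ) :
    ∑ i ∈ Finset.Icc a (a + N - 1), x (i : ZMod N) = ∑ i, x i := by
  have hN : 0 < (N : ℤ) := by exact_mod_cast Nat.pos_of_ne_zero (NeZero.ne N)
  have h : Finset.Icc a (a + N - 1) = Finset.Ico a (a + N) := by
    ext i; simp [Finset.mem_Icc, Finset.mem_Ico] <;> omega
  rw [h]
  refine Finset.sum_bij' (fun i _ => (i : ZMod N))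
    (fun j _ => a + ((j - (a : ZMod N)).val : ℤ)) ?_ ?_ ?_ ?_ ?_
  · intro i _; exact Finset.mem_univ _
  · intro j _
    have := ZMod.val_lt (j - (a : ZMod N))
    simp only [Finset.mem_Ico]
    omega
  · intro i hi
    simp only [Finset.mem_Ico] at hi
    have e : ((i : ZMod N) - (a : ZMod N)) = ((i - a : ℤ) : ZMod N) := by push_cast; ring
    rw [e]
    have hv : (((i - a : ℤ) : ZMod N).val : ℤ) = (i - a) % N := ZMod.val_intCast _
    have : (i - a) % (N : ℤ) = i - a := Int.emod_eq_of_lt (by omega) (by omega)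
    omega
  · intro j _
    push_cast
    simp [ZMod.natCast_val, ZMod.cast_id]
  · intro i _; rfl

lemma split_sum (N : ℕ) (x : ZMod N → ℤ) (a c b : ℤ) (h1 : a ≤ c + 1) (h2 : c ≤ b) :
    ∑ i ∈ Finset.Icc a b, x (i : ZMod N)
      = (∑ i ∈ Finset.Icc a c, x (i : ZMod N)) + ∑ i ∈ Finset.Icc (c+1) b, x (i : ZMod N) := by
  have hu : Finset.Icc a c ∪ Finset.Icc (c+1) b = Finset.Icc a b := by
    ext i; simp only [Finset.mem_union, Finset.mem_Icc]; omega
  have hd : Disjoint (Finset.Icc a c) (Finset.Icc (c+1) b) := by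
    rw [Finset.disjoint_left]; intro i hi hj
    simp only [Finset.mem_Icc] at hi hj; omega
  rw [← hu, Finset.sum_union hd]

lemma reduce (N : ℕ) [NeZero N] (x : ZMod N → ℤ) (hsum : ∑ i, x i = 0) :
    ∀ n : ℕ, ∀ a b : ℤ, a ≤ b → (b - a).toNat = n →
      (∑ i ∈ Finset.Icc a b, x (i : ZMod N)) = 0 ∨
      ∃ a' b' : ℤ, a' ≤ b' ∧ b' - a' + 1 < (N : ℤ) ∧
        (∑ i ∈ Finset.Icc a' b', x (i : ZMod N)) = ∑ i ∈ Finset.Icc a b, x (i : ZMod N) := by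
  intro n
  induction n using Nat.strong_induction_on with
  | _ n ih =>
    intro a b hab hn
    have hN : 0 < (N : ℤ) := by exact_mod_cast Nat.pos_of_ne_zero (NeZero.ne N)
    by_cases hlt : b - a + 1 < (N : ℤ)
    · exact Or.inr ⟨a, b, hab, hlt, rfl⟩
    push_neg at hlt
    by_cases heq : b = a + N - 1
    · left; rw [heq, block_sum N x a, hsum]
    · have hb : a + N ≤ b := by omega
      have hsplit := split_sum N x a (a + N - 1) b (by omega) (by omega)
      rw [block_sum N x a, hsum, zero_add] at hsplit
      have h' : a + (N:ℤ) - 1 + 1 = a + N := by ring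
      rw [h'] at hsplit
      have hlt' : (b - (a + N)).toNat < n := by omega
      rcases ih _ hlt' (a + N) b hb rfl with h | ⟨a', b', h1, h2, h3⟩
      · left; rw [hsplit, h]
      · right; exact ⟨a', b', h1, h2, by rw [h3, hsplit]⟩

theorem stmt_1 (N : ℕ) [NeZero N] (x : ZMod N → ℤ)
    (hx : ∀ i, x i = 1 ∨ x i = -1)
    (hsum : ∑ i, x i = 0) :
    BddAbove (intervalSums N x) ∧
      (sSup (intervalSums N x) = 0 ∨
        ∃ a b : ℤ, a ≤ b ∧ b - a + 1 < (N : ℤ) ∧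
          (∑ i ∈ Finset.Icc a b, x (i : ZMod N)) = sSup (intervalSums N x)) := by
  have hN : 0 < (N : ℤ) := by exact_mod_cast Nat.pos_of_ne_zero (NeZero.ne N)
  have key : ∀ s ∈ intervalSums N x, s = 0 ∨
      ∃ a b : ℤ, a ≤ b ∧ b - a + 1 < (N : ℤ) ∧
        (∑ i ∈ Finset.Icc a b, x (i : ZMod N)) = s := by
    rintro s (hs | ⟨a, b, hab, rfl⟩)
    · left; exact hs
    · rcases reduce N x hsum (b - a).toNat a b hab rfl with h | ⟨a', b', h1, h2, h3⟩
      · left; exact h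
      · right; exact ⟨a', b', h1, h2, h3⟩
  have bound : ∀ s ∈ intervalSums N x, s ≤ (N : ℤ) := by
    intro s hs
    rcases key s hs with rfl | ⟨a, b, hab, hlen, hval⟩
    · omega
    · have : (∑ i ∈ Finset.Icc a b, x (i : ZMod N)) ≤ ∑ i ∈ Finset.Icc a b, 1 := by
        apply Finset.sum_le_sum
        intro i _
        rcases hx (i : ZMod N) with h | h <;> omega
      rw [Finset.sum_const, Int.card_Icc, nsmul_eq_mul, mul_one] at this
      have hcard : ((b + 1 - a).toNat : ℤ) = b + 1 - a := by omega
      omega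
  have hbdd : BddAbove (intervalSums N x) := ⟨(N : ℤ), bound⟩
  refine ⟨hbdd, ?_⟩
  have hne : (intervalSums N x).Nonempty := ⟨0, Or.inl rfl⟩
  have hmem := Int.csSup_mem hne hbdd
  rcases key _ hmem with h | ⟨a, b, h1, h2, h3⟩
  · exact Or.inl h
  · exact Or.inr ⟨a, b, h1, h2, h3⟩
end

section
/- Let M be a positive integer, y : ℤ/Mℤ → {-1,1} with Σ(y) := ∑_{i} y_i ≥ 0, and let ỹ be the lift of y to ℤ. Let r ≥ 0 be an integer. Then any interval [a,b] ⊆ ℤ with ∑_{i=a}^b ỹ_i < -r that is minimal (no proper subinterval also has sum < -r) has length b - a + 1 < M. -/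
lemma Ico_succ_int (a b : ℤ) : Finset.Ico a (b + 1) = Finset.Icc a b := by
  ext x; simp [Finset.mem_Ico, Finset.mem_Icc]

lemma period_sum (M : ℕ) [NeZero M] (y : ZMod M → ℤ) (c : ℤ) :
    ∑ i ∈ Finset.Ico c (c + M), y (i : ZMod M) = ∑ j, y j := by
  have hM : 0 < M := Nat.pos_of_ne_zero (NeZero.ne M)
  have hMZ : (0 : ℤ) < M := by exact_mod_cast hM
  refine Finset.sum_nbij' (fun i => (i : ZMod M))
    (fun j => c + ((j - (c : ZMod M)).val : ℤ)) ?_ ?_ ?_ ?_ ?_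
  · intro x _; exact Finset.mem_univ _
  · intro j _
    simp only [Finset.mem_Ico]
    have h1 : 0 ≤ ((j - (c : ZMod M)).val : ℤ) := Int.ofNat_nonneg _
    have h2 : ((j - (c : ZMod M)).val : ℤ) < (M : ℤ) := by
      exact_mod_cast ZMod.val_lt (j - (c : ZMod M))
    constructor <;> linarith
  · intro x hx
    simp only [Finset.mem_Ico] at hx
    have hdvd : (M : ℤ) ∣ (c + (((x : ZMod M) - (c : ZMod M)).val : ℤ)) - x := by
      have : ((c + (((x : ZMod M) - (c : ZMod M)).val : ℤ) - x : ℤ) : ZMod M) = 0 := by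
        push_cast
        simp [ZMod.natCast_val, ZMod.intCast_cast]
      exact (ZMod.intCast_zmod_eq_zero_iff_dvd _ M).mp this
    have h1 : 0 ≤ (((x : ZMod M) - (c : ZMod M)).val : ℤ) := Int.ofNat_nonneg _
    have h2 : (((x : ZMod M) - (c : ZMod M)).val : ℤ) < (M : ℤ) := by
      exact_mod_cast ZMod.val_lt _
    have h0 : (c + (((x : ZMod M) - (c : ZMod M)).val : ℤ)) - x = 0 := by
      apply Int.eq_zero_of_abs_lt_dvd hdvd
      rw [abs_lt]
      constructor <;> [linarith [hx.2]; linarith [hx.1]]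
    show c + (((x : ZMod M) - (c : ZMod M)).val : ℤ) = x
    linarith
  · intro j _
    push_cast
    simp [ZMod.natCast_val, ZMod.intCast_cast]
  · intro x _; rfl

theorem stmt_7 (M : ℕ) [NeZero M] (y : ZMod M → ℤ)
    (hy : ∀ i, y i = 1 ∨ y i = -1)
    (hsum : 0 ≤ ∑ i, y i)
    (r : ℤ) (hr : 0 ≤ r)
    (a b : ℤ) (hab : a ≤ b)
    (hover : (∑ i ∈ Finset.Icc a b, y (i : ZMod M)) < -r)
    (hmin : ∀ a' b' : ℤ, a ≤ a' → b' ≤ b → a' ≤ b' → (a', b') ≠ (a, b) →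
      -r ≤ ∑ i ∈ Finset.Icc a' b', y (i : ZMod M)) :
    b - a + 1 < (M : ℤ) := by
  have hM : 0 < M := Nat.pos_of_ne_zero (NeZero.ne M)
  have hM' : (1 : ℤ) ≤ (M : ℤ) := by exact_mod_cast hM
  by_contra h
  push_neg at h
  rcases eq_or_lt_of_le h with heq | hlt
  · have hIcc : Finset.Icc a b = Finset.Ico a (a + M) := by
      rw [show a + (M : ℤ) = b + 1 by linarith, Ico_succ_int]
    rw [hIcc, period_sum] at hover
    linarith
  · have hsplit : ∑ i ∈ Finset.Ico a (b + 1), y (i : ZMod M)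
        = (∑ i ∈ Finset.Ico a (a + M), y (i : ZMod M))
          + ∑ i ∈ Finset.Ico (a + M) (b + 1), y (i : ZMod M) :=
 by
      rw [← Finset.sum_union (Finset.Ico_disjoint_Ico_consecutive a (a + M) (b + 1)),
        Finset.Ico_union_Ico_eq_Ico (by linarith : a ≤ a + (M : ℤ)) (by linarith : a + (M : ℤ) ≤ b + 1)]
    have h1 : ∑ i ∈ Finset.Ico a (a + M), y (i : ZMod M) = ∑ j, y j :=
      period_sum M y a
    have h2 : -r ≤ ∑ i ∈ Finset.Ico (a + M) (b + 1), y (i : ZMod M) := by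
      have := hmin (a + M) b (by linarith) le_rfl (by linarith) (by
        intro hc
        have : a + (M : ℤ) = a := (Prod.mk.injEq _ _ _ _ ▸ hc).1
        linarith)
      rwa [Ico_succ_int]
    rw [← Ico_succ_int, hsplit] at hover
    linarith
end
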